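/- arXiv:1010.1499 — 6 statements merged into one kernel-verified Lean document; each statement's English description precedes it below -/
import Mathlib

section
/- For any integers $1 \le j \le K$, the identity $\frac{1}{\binom{K}{j-1}}\sum_{i=1}^{K-j+1}\frac{\binom{K-i}{j-1}}{i} = \sum_{i=j}^{K}\frac{1}{i}$ holds. -/
lemma key (j : ℕ) : ∀ K, j ≤ K →
    ∑ i ∈ Finset.Icc 1 (K - j), ((K - i).choose j : ℚ) / (i : ℚ) =
      (K.choose j : ℚ) * ∑ i ∈ Finset.Icc (j + 1) K, 1 / (i : ℚ) := by
  induction j with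
  | zero =>
    intro K _
    simp
  | succ j ih =>
    intro K hK
    induction K, hK using Nat.le_induction with
    | base => simp
    | succ K hK ihK =>
      have hsub : K + 1 - (j + 1) = K - j := by omega
      have hKj : 1 ≤ K - j := by omega
      have lhs_split :
          ∑ i ∈ Finset.Icc 1 (K + 1 - (j + 1)), ((K + 1 - i).choose (j + 1) : ℚ) / (i : ℚ)
            = (∑ i ∈ Finset.Icc 1 (K - (j + 1)), ((K - i).choose (j + 1) : ℚ) / (i : ℚ))
              + ∑ i ∈ Finset.Icc 1 (K - j), ((K - i).choose j : ℚ) / (i : ℚ) := by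
        rw [hsub]
        have step : ∀ i ∈ Finset.Icc 1 (K - j),
            ((K + 1 - i).choose (j + 1) : ℚ) / (i : ℚ)
              = ((K - i).choose (j + 1) : ℚ) / (i : ℚ) + ((K - i).choose j : ℚ) / (i : ℚ) := by
          intro i hi
          simp only [Finset.mem_Icc] at hi
          have h1 : K + 1 - i = (K - i) + 1 := by omega
          rw [h1, Nat.choose_succ_succ]
          push_cast
          ring
        rw [Finset.sum_congr rfl step, Finset.sum_add_distrib]
        congr 1
        have htop : K - j = (K - (j+1)) + 1 := by omega
        rw [htop, Finset.sum_Icc_succ_top (by omega)]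
        have hh : K - ((K - (j+1)) + 1) = j := by omega
        rw [hh, Nat.choose_eq_zero_of_lt (by omega)]
        simp
      rw [lhs_split, ihK, ih K (by omega)]
      have hsum1 : ∑ i ∈ Finset.Icc (j + 1 + 1) (K + 1), 1 / (i : ℚ)
          = (∑ i ∈ Finset.Icc (j + 1 + 1) K, 1 / (i : ℚ)) + 1 / ((K : ℚ) + 1) := by
        rw [Finset.sum_Icc_succ_top (by omega)]
        push_cast
        ring_nf
      have hsum2 : ∑ i ∈ Finset.Icc (j + 1) K, 1 / (i : ℚ)
          = 1 / ((j : ℚ) + 1) + ∑ i ∈ Finset.Icc (j + 1 + 1) K, 1 / (i : ℚ) := by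
        rw [show Finset.Icc (j+1+1) K = Finset.Ioc (j+1) K from Finset.Icc_add_one_left_eq_Ioc _ _,
          ← Finset.Ioc_insert_left hK, Finset.sum_insert (by simp)]
        simp [one_div]
      rw [hsum1, hsum2]
      have hpascal : ((K + 1).choose (j + 1) : ℚ) = (K.choose (j + 1) : ℚ) + (K.choose j : ℚ) := by
        rw [Nat.choose_succ_succ]
        push_cast
        ring
      have hmul : ((K : ℚ) + 1) * (K.choose j : ℚ) = ((K + 1).choose (j + 1) : ℚ) * ((j : ℚ) + 1) := by
        exact_mod_cast Nat.add_one_mul_choose_eq K j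
      have hK0 : ((K : ℚ) + 1) ≠ 0 := by positivity
      have hj0 : ((j : ℚ) + 1) ≠ 0 := by positivity
      rw [hpascal] at hmul ⊢
      field_simp
      linear_combination hmul

theorem stmt_0 (K j : ℕ) (hj : 1 ≤ j) (hjK : j ≤ K) :
    (1 / (K.choose (j - 1) : ℚ)) *
      ∑ i ∈ Finset.Icc 1 (K - j + 1), ((K - i).choose (j - 1) : ℚ) / (i : ℚ) =
    ∑ i ∈ Finset.Icc j K, 1 / (i : ℚ) := by
  have h1 : K - j + 1 = K - (j - 1) := by omega
  have h2 : (j - 1) + 1 = j := by omega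
  have hkey := key (j - 1) K (by omega)
  rw [h1, hkey, h2]
  have hne : (K.choose (j - 1) : ℚ) ≠ 0 := by
    exact_mod_cast Nat.choose_pos (by omega : j - 1 ≤ K) |>.ne'
  field_simp
end

section
/- Define $f(j) = \frac{1}{\binom{K}{j-1}}\sum_{i=1}^{K-j+1}\frac{\binom{K-i}{j-1}}{i}$ for $1 \le j \le K$. Then $f(K) = 1/K$ and for every $1 \le j \le K-1$, $f(j) - f(j+1) = 1/j$. -/
theorem aux (k : ℕ) : ∀ n : ℕ,
    ∑ i ∈ Finset.Icc 1 (n+1), ((n+k+1-i).choose k : ℚ) / (i : ℚ)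
      = ((n+k+1).choose k : ℚ) * ∑ m ∈ Finset.Icc (k+1) (n+k+1), (1 : ℚ)/m := by
  induction k with
  | zero =>
    intro n
    simp [Nat.choose_zero_right, one_div]
  | succ k IH2 =>
    intro n
    induction n with
    | zero =>
      simp only [Nat.zero_add, Nat.choose_succ_self_right]
      norm_num
      rw [eq_comm, mul_inv_cancel₀ (by positivity)]
    | succ n IH1 =>
      have hsplit : ∀ i ∈ Finset.Icc 1 (n+2),
          ((n+1+(k+1)+1-i).choose (k+1) : ℚ) / (i:ℚ)
            = ((n+k+2-i).choose k : ℚ)/(i:ℚ) + ((n+k+2-i).choose (k+1) : ℚ)/(i:ℚ) := by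
        intro i hi
        rw [Finset.mem_Icc] at hi
        have h1 : n+1+(k+1)+1-i = (n+k+2-i)+1 := by omega
        rw [h1, Nat.choose_succ_succ']
        push_cast
        ring
      rw [Finset.sum_congr rfl hsplit, Finset.sum_add_distrib]
      have htop : (∑ i ∈ Finset.Icc 1 (n+2), ((n+k+2-i).choose (k+1) : ℚ)/(i:ℚ))
          = ∑ i ∈ Finset.Icc 1 (n+1), ((n+k+2-i).choose (k+1) : ℚ)/(i:ℚ) := by
        rw [Finset.sum_Icc_succ_top (by omega)]
        have h2 : n+k+2-(n+2) = k := by omega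
        rw [h2, Nat.choose_succ_self]
        simp
      rw [htop]
      -- normalize IH's
      have e1 := IH1
      have hA : n+(k+1)+1 = n+k+2 := by omega
      have hB : k+1+1 = k+2 := by omega
      rw [hA, hB] at e1
      rw [e1]
      have e2 := IH2 (n+1)
      have hC : n+1+k+1 = n+k+2 := by omega
      rw [hC] at e2
      rw [e2]
      -- normalize goal RHS indices
      have hD : n+1+(k+1)+1 = n+k+3 := by omega
      rw [hD, hB]
      -- sum manipulations
      rw [Finset.sum_Icc_succ_top (show k+2 ≤ n+k+3 by omega)]
      have hE : Finset.Icc (k+1) (n+k+2) = insert (k+1) (Finset.Icc (k+2) (n+k+2)) := by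
        ext x; simp [Finset.mem_Icc, Finset.mem_insert]; omega
      rw [hE, Finset.sum_insert (by simp [Finset.mem_Icc])]
      -- algebra
      have hp : ((n+k+3).choose (k+1) : ℚ) = (n+k+2).choose k + (n+k+2).choose (k+1) := by
        have h4 := Nat.choose_succ_succ' (n+k+2) k
        rw [show n+k+2+1 = n+k+3 from by omega] at h4
        rw [h4]; push_cast; ring
      have hq : ((k:ℚ)+1) * ((n+k+3).choose (k+1) : ℚ) = ((n:ℚ)+k+3) * ((n+k+2).choose k : ℚ) := by
        have h3 := Nat.add_one_mul_choose_eq (n+k+2) k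
        rw [show n+k+2+1 = n+k+3 from by omega] at h3
        have h3q : ((n:ℚ)+(k:ℚ)+3) * (((n+k+2).choose k : ℕ) : ℚ)
            = (((n+k+3).choose (k+1) : ℕ) : ℚ) * ((k:ℚ)+1) := by exact_mod_cast h3
        linear_combination -h3q
      set H := ∑ m ∈ Finset.Icc (k+2) (n+k+2), (1:ℚ)/m
      have h1 : ((k:ℚ)+1) ≠ 0 := by positivity
      have h2 : ((n:ℚ)+k+3) ≠ 0 := by positivity
      push_cast
      field_simp
      linear_combination (-1 : ℚ)*hq - H*((k:ℚ)+1)*((n:ℚ)+(k:ℚ)+3)*hp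
theorem stmt_2 (K : ℕ) (hK : 1 ≤ K)
    (f : ℕ → ℚ)
    (hf : ∀ j, f j = (1 / (K.choose (j - 1) : ℚ)) *
      ∑ i ∈ Finset.Icc 1 (K - j + 1), ((K - i).choose (j - 1) : ℚ) / (i : ℚ)) :
    f K = 1 / (K : ℚ) ∧
    ∀ j, 1 ≤ j → j ≤ K - 1 → f j - f (j + 1) = 1 / (j : ℚ) := by
  have hclean : ∀ j, 1 ≤ j → j ≤ K → f j = ∑ m ∈ Finset.Icc j K, (1 : ℚ)/m := by
    intro j h1 h2
    have haux := aux (j-1) (K-j)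
    rw [show (K-j)+(j-1)+1 = K from by omega, show (j-1)+1 = j from by omega] at haux
    rw [hf j, haux, one_div, inv_mul_cancel_left₀]
    exact_mod_cast Nat.choose_pos (show j - 1 ≤ K by omega) |>.ne'
  constructor
  · rw [hclean K hK le_rfl, Finset.Icc_self, Finset.sum_singleton]
  · intro j h1 h2
    rw [hclean j h1 (by omega), hclean (j+1) (by omega) (by omega)]
    have hE : Finset.Icc j K = insert j (Finset.Icc (j+1) K) := by
      ext x; simp [Finset.mem_Icc, Finset.mem_insert]; omega
    rw [hE, Finset.sum_insert (by simp [Finset.mem_Icc])]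
    ring
end

section
/- Define the sequence $D_j$ for $1 \le j \le K$ by $D_K = 1$ and the backward recursion $\frac{K-j+1}{j}\cdot\frac{1}{D_j} = \frac{1}{j} + \frac{K-j}{j+1}\cdot\frac{1}{D_{j+1}}$ for $1 \le j \le K-1$. Then $D_j = \frac{K-j+1}{j} \cdot \frac{1}{\sum_{i=j}^{K} \frac{1}{i}}$ for all $1 \le j \le K$. -/
theorem stmt_5 (K : ℕ) (hK : 1 ≤ K) (D : ℕ → ℚ)
    (hpos : ∀ j, 1 ≤ j → j ≤ K → 0 < D j)
    (hDK : D K = 1)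
    (hrec : ∀ j, 1 ≤ j → j ≤ K - 1 →
      ((K : ℚ) - j + 1) / j * (1 / D j) =
        1 / (j : ℚ) + ((K : ℚ) - j) / (j + 1) * (1 / D (j + 1))) :
    ∀ j, 1 ≤ j → j ≤ K →
      D j = ((K : ℚ) - j + 1) / j * (1 / ∑ i ∈ Finset.Icc j K, 1 / (i : ℚ)) := by
  have Spos : ∀ j, 1 ≤ j → j ≤ K → 0 < ∑ i ∈ Finset.Icc j K, 1 / (i : ℚ) := by
    intro j hj1 hjK
    apply Finset.sum_pos
    · intro i hi
      simp only [Finset.mem_Icc] at hi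
      have : 0 < (i : ℚ) := by exact_mod_cast lt_of_lt_of_le hj1 hi.1
      positivity
    · exact ⟨j, Finset.mem_Icc.mpr ⟨le_refl j, hjK⟩⟩
  have key : ∀ n, ∀ j, 1 ≤ j → j ≤ K → K - j = n →
      D j = ((K : ℚ) - j + 1) / j * (1 / ∑ i ∈ Finset.Icc j K, 1 / (i : ℚ)) := by
    intro n
    induction n with
    | zero =>
      intro j hj1 hjK hn
      have hjK' : j = K := le_antisymm hjK (Nat.le_of_sub_eq_zero hn)
      subst hjK'
      rw [hDK]
      rw [Finset.Icc_self, Finset.sum_singleton]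
      have hj0 : (j : ℚ) ≠ 0 := Nat.cast_ne_zero.mpr (by omega)
      field_simp
      ring
    | succ n ih =>
      intro j hj1 hjK hn
      have hjlt : j < K := by omega
      have hrecj := hrec j hj1 (by omega)
      have ihj := ih (j + 1) (by omega) (by omega) (by omega)
      have hS1 : 0 < ∑ i ∈ Finset.Icc (j+1) K, 1 / (i : ℚ) := Spos (j+1) (by omega) (by omega)
      have hS : 0 < ∑ i ∈ Finset.Icc j K, 1 / (i : ℚ) := Spos j hj1 hjK
      have hsplit : ∑ i ∈ Finset.Icc j K, 1 / (i : ℚ)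
          = 1 / (j : ℚ) + ∑ i ∈ Finset.Icc (j+1) K, 1 / (i : ℚ) := by
        rw [Finset.Icc_eq_cons_Ioc hjK, Finset.sum_cons, Finset.Icc_add_one_left_eq_Ioc]
      have hDj1 := (hpos (j+1) (by omega) (by omega)).ne'
      have hKj : (0:ℚ) < (K:ℚ) - j := by
        have : (j:ℚ) < K := by exact_mod_cast hjlt
        linarith
      have hj0 : (j : ℚ) ≠ 0 := Nat.cast_ne_zero.mpr (by omega)
      have h1 : ((K:ℚ) - j)/((j:ℚ)+1) * (1 / D (j+1)) = ∑ i ∈ Finset.Icc (j+1) K, 1/(i:ℚ) := by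
        rw [ihj]
        push_cast
        have h2 : (K:ℚ) - ((j:ℚ)+1) + 1 = (K:ℚ) - j := by ring
        rw [h2]
        field_simp
      rw [h1, ← hsplit] at hrecj
      have hDj := (hpos j hj1 hjK).ne'
      field_simp at hrecj ⊢
      linarith [hrecj]
  intro j hj1 hjK
  exact key (K - j) j hj1 hjK rfl
end

section
/- For $M \ge K - j + 1$, the achievable lower bound $\frac{K-j+1}{j}\cdot\frac{1}{\sum_{i=j}^{K} 1/i}$ equals the upper bound $\binom{K}{j} \Big/ \sum_{i=1}^{K-j+1} \frac{\binom{K-i}{j-1}}{\min\{i, M\}}$, where under the assumption $M \ge K-j+1$ each $\min\{i,M\} = i$ for $i \le K-j+1$. -/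
lemma aux_harmonic_choose : ∀ K j : ℕ, 1 ≤ j → j ≤ K →
    (∑ i ∈ Finset.Icc 1 (K - j + 1), ((K - i).choose (j - 1) : ℚ) / i)
      = (K.choose (j - 1) : ℚ) * ∑ i ∈ Finset.Icc j K, 1 / (i : ℚ) := by
  intro K
  induction K with
  | zero => intro j hj hjK; omega
  | succ K ih =>
    intro j hj hjK
    rcases eq_or_lt_of_le hj with hj1 | hj2
    · -- j = 1
      subst hj1
      simp [Nat.choose_zero_right]
    · rcases eq_or_lt_of_le hjK with hjK1 | hjK2
      · -- j = K + 1
        subst hjK1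
        have h1 : K + 1 - (K + 1) + 1 = 1 := by omega
        rw [h1]
        simp [Nat.succ_sub_one, Nat.choose_succ_self_right]
        exact (mul_inv_cancel₀ (by positivity : ((K : ℚ) + 1) ≠ 0)).symm
      · -- 2 ≤ j ≤ K
        obtain ⟨l, rfl⟩ : ∃ l, j = l + 2 := ⟨j - 2, by omega⟩
        have hlK : l + 2 ≤ K := by omega
        have hbound : K + 1 - (l + 2) + 1 = K - l := by omega
        rw [hbound]
        -- rewrite each term with Pascal
        have hsplit : (∑ i ∈ Finset.Icc 1 (K - l), ((K + 1 - i).choose (l + 2 - 1) : ℚ) / i)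
            = (∑ i ∈ Finset.Icc 1 (K - l), ((K - i).choose l : ℚ) / i)
              + ∑ i ∈ Finset.Icc 1 (K - l), ((K - i).choose (l + 1) : ℚ) / i := by
          rw [← Finset.sum_add_distrib]
          apply Finset.sum_congr rfl
          intro i hi
          simp only [Finset.mem_Icc] at hi
          have h1 : K + 1 - i = (K - i) + 1 := by omega
          rw [h1]
          have : ((K - i) + 1).choose (l + 2 - 1) = (K - i).choose l + (K - i).choose (l + 1) := by
            have := Nat.choose_succ_succ (K - i) l
            simpa using this
          rw [this]
          push_cast
          ring
        rw [hsplit]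
        -- Sum A via IH at j = l+1
        have hA := ih (l + 1) (by omega) (by omega)
        have hA' : K - (l + 1) + 1 = K - l := by omega
        rw [hA'] at hA
        simp only [show l + 1 - 1 = l from rfl] at hA
        -- Sum B: top term vanishes
        have hKl : K - l = (K - l - 1) + 1 := by omega
        have hB : (∑ i ∈ Finset.Icc 1 (K - l), ((K - i).choose (l + 1) : ℚ) / i)
            = ∑ i ∈ Finset.Icc 1 (K - l - 1), ((K - i).choose (l + 1) : ℚ) / i := by
          rw [hKl, Finset.sum_Icc_succ_top (by omega)]
          have : K - (K - l - 1 + 1) = l := by omega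
          rw [this]
          simp [Nat.choose_eq_zero_of_lt (by omega : l < l + 1)]
        have hB2 := ih (l + 2) (by omega) hlK
        have hB2' : K - (l + 2) + 1 = K - l - 1 := by omega
        rw [hB2'] at hB2
        simp only [show l + 2 - 1 = l + 1 from rfl] at hB2 ⊢
        rw [hA, hB, hB2]
        -- RHS manipulations
        rw [Finset.sum_Icc_succ_top (by omega : l + 2 ≤ K + 1)]
        have hins : Finset.Icc (l + 1) K = insert (l + 1) (Finset.Icc (l + 2) K) := by
          ext x; simp only [Finset.mem_Icc, Finset.mem_insert]; omega
        rw [hins, Finset.sum_insert (by simp)]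
        -- Pascal and succ_mul_choose in ℚ
        have hpas : ((K + 1).choose (l + 1) : ℚ) = (K.choose l : ℚ) + (K.choose (l + 1) : ℚ) := by
          exact_mod_cast Nat.choose_succ_succ K l
        have hmul : ((K : ℚ) + 1) * (K.choose l : ℚ) = ((K + 1).choose (l + 1) : ℚ) * ((l : ℚ) + 1) := by
          exact_mod_cast Nat.add_one_mul_choose_eq K l
        set H : ℚ := ∑ i ∈ Finset.Icc (l + 2) K, 1 / (i : ℚ)
        have h1 : ((l : ℚ) + 1) ≠ 0 := by positivity
        have h2 : ((K : ℚ) + 1) ≠ 0 := by positivity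
        have hdiv : (K.choose l : ℚ) / ((l : ℚ) + 1) = ((K + 1).choose (l + 1) : ℚ) / ((K : ℚ) + 1) := by
          rw [div_eq_div_iff h1 h2]
          linarith [hmul]
        push_cast
        linear_combination (-H) * hpas + hdiv

theorem stmt_7 (K j M : ℕ) (hj : 1 ≤ j) (hjK : j ≤ K) (hM : K - j + 1 ≤ M) :
    ((K : ℚ) - j + 1) / j * (1 / ∑ i ∈ Finset.Icc j K, 1 / (i : ℚ)) =
      (K.choose j : ℚ) /
        ∑ i ∈ Finset.Icc 1 (K - j + 1), ((K - i).choose (j - 1) : ℚ) / (min i M : ℚ) := by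
  have hmin : (∑ i ∈ Finset.Icc 1 (K - j + 1), ((K - i).choose (j - 1) : ℚ) / (min i M : ℚ))
      = ∑ i ∈ Finset.Icc 1 (K - j + 1), ((K - i).choose (j - 1) : ℚ) / i := by
    apply Finset.sum_congr rfl
    intro i hi
    simp only [Finset.mem_Icc] at hi
    have hiM : (min (i : ℚ) (M : ℚ)) = (i : ℚ) := by
      rw [min_eq_left]
      exact_mod_cast (by omega : i ≤ M)
    rw [hiM]
  rw [hmin, aux_harmonic_choose K j hj hjK]
  have hH : (0 : ℚ) < ∑ i ∈ Finset.Icc j K, 1 / (i : ℚ) := by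
    apply Finset.sum_pos
    · intro i hi
      simp only [Finset.mem_Icc] at hi
      have : 0 < i := by omega
      positivity
    · exact ⟨j, by simp [Finset.mem_Icc]; omega⟩
  have hC : (0 : ℚ) < (K.choose (j - 1) : ℚ) := by
    exact_mod_cast Nat.choose_pos (by omega)
  have hj0 : ((j : ℚ)) ≠ 0 := by positivity
  have hkey : (K.choose j : ℚ) * (j : ℚ) = (K.choose (j - 1) : ℚ) * ((K : ℚ) - j + 1) := by
    have h := Nat.add_one_mul_choose_eq
    have h2 : K.choose j * j = K.choose (j - 1) * (K - (j - 1)) := by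
      have := Nat.choose_succ_right_eq K (j - 1)
      have hjj : j - 1 + 1 = j := by omega
      rw [hjj] at this
      exact this
    have h3 : ((K - (j - 1) : ℕ) : ℚ) = (K : ℚ) - j + 1 := by
      have : (K - (j - 1)) = K - j + 1 := by omega
      rw [this]
      push_cast [Nat.cast_sub hjK]
      ring
    calc (K.choose j : ℚ) * j = ((K.choose j * j : ℕ) : ℚ) := by push_cast; ring
      _ = ((K.choose (j - 1) * (K - (j - 1)) : ℕ) : ℚ) := by rw [h2]
      _ = (K.choose (j - 1) : ℚ) * ((K : ℚ) - j + 1) := by push_cast; rw [h3]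
  rw [div_mul_div_comm, div_eq_div_iff (by positivity) (by positivity)]
  set H : ℚ := ∑ i ∈ Finset.Icc j K, 1 / (i : ℚ)
  linear_combination (-H) * hkey
end

section
/- The recursion $\frac{q_j+1}{j}\cdot\frac{1}{D_j} = \frac{1}{j} + \frac{q_j}{j+1}\cdot\frac{1}{D_{j+1}}$ with $q_j = \min\{M-1, K-j\}$ and $D_K = 1$, when $M \ge K - j_0 + 1$ for all $j \ge j_0$ (so that $q_j = K-j$), yields $D_{j_0} = \frac{K-j_0+1}{j_0}\cdot\frac{1}{\sum_{i=j_0}^K 1/i}$, i.e., the general recursion of Theorem 4 reduces to the closed form of Theorem 1 when the antenna condition holds. -/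
theorem stmt_16 (M K j₀ : ℕ) (hj₀ : 1 ≤ j₀) (hjK : j₀ ≤ K) (hM : K - j₀ + 1 ≤ M)
    (D : ℕ → ℚ)
    (hpos : ∀ j, j₀ ≤ j → j ≤ K → 0 < D j)
    (hDK : D K = 1)
    (hrec : ∀ j, j₀ ≤ j → j ≤ K - 1 →
      ((min (M - 1) (K - j) : ℕ) + 1 : ℚ) / j * (1 / D j) =
        1 / (j : ℚ) + ((min (M - 1) (K - j) : ℕ) : ℚ) / (j + 1) * (1 / D (j + 1))) :
    D j₀ = ((K : ℚ) - j₀ + 1) / j₀ * (1 / ∑ i ∈ Finset.Icc j₀ K, 1 / (i : ℚ)) := by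
  have key : ∀ d : ℕ, ∀ j : ℕ, j₀ ≤ j → j + d = K →
      1 / D j = (j : ℚ) / ((K : ℚ) - j + 1) * ∑ i ∈ Finset.Icc j K, 1 / (i : ℚ) := by
    intro d
    induction d with
    | zero =>
      intro j hj hjd
      have : j = K := by omega
      subst this
      rw [hDK, Finset.Icc_self, Finset.sum_singleton]
      have hK : (0 : ℚ) < j := by exact_mod_cast (by omega : 0 < j)
      field_simp
      ring
    | succ d ih =>
      intro j hj hjd
      have hjlt : j < K := by omega
      have hmin : min (M - 1) (K - j) = K - j := by omega
      have hr := hrec j hj (by omega)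
      rw [hmin] at hr
      have hIH := ih (j + 1) (by omega) (by omega)
      have hcast : ((K - j : ℕ) : ℚ) = (K : ℚ) - j := by
        have := Nat.cast_sub (le_of_lt hjlt) (R := ℚ); exact this
      have hcast1 : ((K : ℚ) - (j + 1 : ℕ) + 1) = (K : ℚ) - j := by push_cast; ring
      rw [hcast] at hr
      rw [hcast1] at hIH
      have hset : Finset.Icc j K = insert j (Finset.Icc (j + 1) K) := by
        ext x; simp only [Finset.mem_Icc, Finset.mem_insert]; omega
      have hsum : ∑ i ∈ Finset.Icc j K, 1 / (i : ℚ)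
          = 1 / (j : ℚ) + ∑ i ∈ Finset.Icc (j + 1) K, 1 / (i : ℚ) := by
        rw [hset, Finset.sum_insert (by simp [Finset.mem_Icc])]
      have hj0 : (j : ℚ) ≠ 0 := by exact_mod_cast (by omega : j ≠ 0)
      have hKj : (K : ℚ) - j ≠ 0 := by
        rw [← hcast]; exact_mod_cast (by omega : K - j ≠ 0)
      have hKj1 : (K : ℚ) - j + 1 ≠ 0 := by
        rw [← hcast]
        have : (0:ℚ) < ((K - j : ℕ) : ℚ) + 1 := by positivity
        exact ne_of_gt this
      have hj1 : ((j : ℚ) + 1) ≠ 0 := by positivity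
      -- substitute IH into hr
      rw [hIH] at hr
      have hr2 : ((K : ℚ) - j + 1) / j * (1 / D j)
          = 1 / j + ∑ i ∈ Finset.Icc (j + 1) K, 1 / (i : ℚ) := by
        rw [hr]
        congr 1
        push_cast
        field_simp
      have hDne : D j ≠ 0 := ne_of_gt (hpos j hj (by omega))
      rw [hsum]
      have : 1 / D j = (j : ℚ) / ((K : ℚ) - j + 1) * (((K : ℚ) - j + 1) / j * (1 / D j)) := by
        field_simp
      rw [this, hr2]
  have hDj := key (K - j₀) j₀ le_rfl (by omega)
  have hDpos := hpos j₀ le_rfl hjK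
  have hSpos : 0 < ∑ i ∈ Finset.Icc j₀ K, 1 / (i : ℚ) := by
    apply Finset.sum_pos
    · intro i hi
      simp only [Finset.mem_Icc] at hi
      have : (0 : ℚ) < i := by exact_mod_cast (by omega : 0 < i)
      positivity
    · exact ⟨K, by simp [Finset.mem_Icc, hjK]⟩
  have hj0 : (0 : ℚ) < (j₀ : ℚ) := by exact_mod_cast hj₀
  have hKj1 : (0 : ℚ) < (K : ℚ) - j₀ + 1 := by
    have : ((j₀ : ℚ)) ≤ K := by exact_mod_cast hjK
    linarith
  have h1 : (D j₀)⁻¹ = (j₀ : ℚ) / ((K : ℚ) - j₀ + 1) * ∑ i ∈ Finset.Icc j₀ K, 1 / (i : ℚ) := by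
    rw [← one_div]; exact hDj
  have hSne : (∑ i ∈ Finset.Icc j₀ K, 1 / (i : ℚ)) ≠ 0 := ne_of_gt hSpos
  rw [← inv_inv (D j₀), h1]
  field_simp
end

section
/- For all integers $1 \le j < K$, the order-$j$ DoF closed form satisfies $\frac{K-j+1}{j}\cdot\frac{1}{\sum_{i=j}^{K} 1/i} > \frac{K-j}{j+1}\cdot\frac{1}{\sum_{i=j+1}^{K} 1/i}$, i.e., the closed-form DoF is strictly decreasing in the message order $j$. -/
theorem stmt_19 (K j : ℕ) (hj : 1 ≤ j) (hjK : j < K) :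
    ((K : ℚ) - j) / (j + 1) * (1 / ∑ i ∈ Finset.Icc (j + 1) K, 1 / (i : ℚ)) <
      ((K : ℚ) - j + 1) / j * (1 / ∑ i ∈ Finset.Icc j K, 1 / (i : ℚ)) := by
  set S : ℚ := ∑ i ∈ Finset.Icc (j + 1) K, 1 / (i : ℚ) with hSdef
  have hjQ : (1:ℚ) ≤ j := by exact_mod_cast hj
  have hK : (j:ℚ) < K := by exact_mod_cast hjK
  have hKpos : (0:ℚ) < K := by linarith
  have hcard : (Finset.Icc (j+1) K).card = K - j := by
    rw [Nat.card_Icc]; omega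
  have h1 : ∀ i ∈ Finset.Icc (j+1) K, (1:ℚ)/K ≤ 1/(i:ℚ) := by
    intro i hi
    simp only [Finset.mem_Icc] at hi
    have hi0 : (0:ℚ) < i := by
      have : 1 ≤ i := by omega
      exact_mod_cast Nat.lt_of_lt_of_le Nat.zero_lt_one this
    exact one_div_le_one_div_of_le hi0 (by exact_mod_cast hi.2)
  have hS_lb : ((K:ℚ) - j) / K ≤ S := by
    calc ((K:ℚ)-j)/K = (Finset.Icc (j+1) K).card * (1/K) := by
          rw [hcard]
          rw [Nat.cast_sub hjK.le]
          ring
      _ = ∑ _i ∈ Finset.Icc (j+1) K, (1:ℚ)/K := by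
          rw [Finset.sum_const, nsmul_eq_mul]
      _ ≤ S := Finset.sum_le_sum h1
  have hSpos : (0:ℚ) < S := lt_of_lt_of_le (div_pos (by linarith) hKpos) hS_lb
  have hsplit : ∑ i ∈ Finset.Icc j K, 1 / (i : ℚ) = 1/(j:ℚ) + S := by
    rw [show Finset.Icc j K = insert j (Finset.Icc (j+1) K) by
      ext x; simp [Finset.mem_Icc]; omega]
    rw [Finset.sum_insert (by simp)]
  rw [hsplit]
  have hjpos : (0:ℚ) < j := by linarith
  have hT : (0:ℚ) < 1/(j:ℚ) + S := by positivity
  rw [div_mul_div_comm, div_mul_div_comm, div_lt_div_iff₀ (by positivity) (by positivity)]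
  have key : (K:ℚ) - j < (K + 1) * S := by
    have : ((K:ℚ)+1) * (((K:ℚ)-j)/K) < (K+1) * S ∨ ((K:ℚ)-j)/K = S := by
      rcases lt_or_eq_of_le hS_lb with h | h
      · left; exact mul_lt_mul_of_pos_left h (by linarith)
      · right; exact h
    rcases lt_or_eq_of_le hS_lb with h | h
    · have h2 : ((K:ℚ)+1) * (((K:ℚ)-j)/K) < (K+1) * S := mul_lt_mul_of_pos_left h (by linarith)
      have h3 : (K:ℚ) - j ≤ ((K:ℚ)+1) * (((K:ℚ)-j)/K) := by
        rw [mul_div_assoc']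
        rw [le_div_iff₀ hKpos]
        nlinarith
      linarith
    · rw [← h]
      rw [mul_div_assoc']
      rw [lt_div_iff₀ hKpos]
      nlinarith
  have expand : ((K:ℚ)-j+1)*(1*((1+j)*S)) - ((K:ℚ)-j)*(1*(j*(1/j+S)))
      = ((K:ℚ)+1)*S - ((K:ℚ)-j) := by
    field_simp
    ring
  linarith
end
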